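/- For any complex numbers a_1, …, a_N and any 1 ≤ M ≤ N, one has |Σ_{n=1}^M a_n| ≪ Σ_{j=−N}^{N} (1/(|j|+1)) · |Σ_{n=1}^N a_n e(jn/N)|, with an absolute implied constant. -/

import Mathlib

open Filter

/-- `ee t = e(t) = exp(2πit)`. -/
noncomputable def ee (t : ℝ) : ℂ := Complex.exp (2 * Real.pi * Complex.I * t)

lemma ee_add (s t : ℝ) : ee (s + t) = ee s * ee t := by
  rw [ee, ee, ee, ← Complex.exp_add]
  push_cast
  ring_nf

lemma ee_int (k : ℤ) : ee k = 1 := by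
  rw [ee, show (2 * (Real.pi:ℂ) * Complex.I * (k:ℝ)) = (k:ℤ) * (2 * Real.pi * Complex.I) by push_cast; ring]
  exact Complex.exp_int_mul_two_pi_mul_I k

lemma ee_nat_mul (n : ℕ) (x : ℝ) : ee (n * x) = ee x ^ n := by
  rw [ee, ee, ← Complex.exp_nat_mul]
  push_cast
  ring_nf

lemma abs_ee_sub_one (t : ℝ) : ‖ee t - 1‖ = 2 * |Real.sin (Real.pi * t)| := by
  have h : ee t = Complex.exp ((2 * Real.pi * t : ℝ) * Complex.I) := by
    rw [ee]; push_cast; ring_nf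
  rw [h, Complex.exp_mul_I, ← Complex.ofReal_cos, ← Complex.ofReal_sin]
  set θ := 2 * Real.pi * t with hθ
  have h1 : (↑(Real.cos θ) + ↑(Real.sin θ) * Complex.I - 1 : ℂ)
      = Complex.mk (Real.cos θ - 1) (Real.sin θ) := by
    apply Complex.ext <;> simp [Complex.cos_ofReal_re, Complex.sin_ofReal_re]
  rw [h1, Complex.norm_def, Complex.normSq_mk]
  have h2 : (Real.cos θ - 1) * (Real.cos θ - 1) + Real.sin θ * Real.sin θ
      = (2 * |Real.sin (Real.pi * t)|) ^ 2 := by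
    have hs : Real.sin (θ/2) ^ 2 = 1 - Real.cos (θ/2) ^ 2 := Real.sin_sq _
    have hc : Real.cos (θ/2) ^ 2 = 1/2 + Real.cos θ / 2 := by
      have := Real.cos_sq (θ/2)
      rwa [show 2 * (θ/2) = θ by ring] at this
    have hsq : Real.sin θ ^ 2 + Real.cos θ ^ 2 = 1 := Real.sin_sq_add_cos_sq θ
    have hhalf : θ / 2 = Real.pi * t := by rw [hθ]; ring
    rw [← hhalf]
    have habs : |Real.sin (θ/2)| ^ 2 = Real.sin (θ/2) ^ 2 := sq_abs _
    nlinarith [habs, hs, hc, hsq]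
  rw [h2, Real.sqrt_sq (by positivity)]

lemma abs_ee (t : ℝ) : ‖ee t‖ = 1 := by
  have h : ee t = Complex.exp ((2 * Real.pi * t : ℝ) * Complex.I) := by
    rw [ee]; push_cast; ring_nf
  rw [h, Complex.norm_exp_ofReal_mul_I]

lemma ee_nat (n : ℕ) : ee n = 1 := by
  rw [show ((n:ℝ)) = ((n:ℤ):ℝ) by push_cast; ring, ee_int]

lemma ee_sub_nat (x : ℝ) (n : ℕ) : ee (x - n) = ee x := by
  calc ee (x - n) = ee (x - n) * ee n := by rw [ee_nat, mul_one]
    _ = ee (x - n + n) := (ee_add _ _).symm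
    _ = ee x := by ring_nf

lemma telescope (z : ℂ) (M : ℕ) :
    ∑ m ∈ Finset.Icc 1 M, (z ^ (m+1) - z ^ m) = z ^ (M + 1) - z ^ 1 := by
  induction M with
  | zero => simp
  | succ k ih =>
    rw [Finset.sum_Icc_succ_top (by omega), ih]
    ring

/-- telescoping bound for geometric-type sums -/
lemma geom_bound (z : ℂ) (hz : ‖z‖ = 1) (M : ℕ) :
    ‖∑ m ∈ Finset.Icc 1 M, z ^ m‖ * ‖z - 1‖ ≤ 2 := by
  rw [← norm_mul, Finset.sum_mul]
  have h1 : ∑ m ∈ Finset.Icc 1 M, z ^ m * (z - 1) = z ^ (M + 1) - z ^ 1 := by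
    have h2 : ∀ m : ℕ, z ^ m * (z - 1) = z ^ (m+1) - z ^ m := by intro m; ring
    simp_rw [h2]
    exact telescope z M
  rw [h1]
  calc ‖z ^ (M+1) - z ^ 1‖
      ≤ ‖z ^ (M+1)‖ + ‖z ^ 1‖ := by
        exact norm_sub_le _ _
    _ = 2 := by rw [norm_pow, norm_pow, hz]; norm_num

lemma sin_pos_frac {j N : ℕ} (h0 : 0 < j) (hN : j < N) :
    0 < Real.sin (Real.pi * ((j:ℝ) / N)) := by
  have hN0 : (0:ℝ) < N := by
    have : 0 < N := by omega
    exact_mod_cast this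
  apply Real.sin_pos_of_pos_of_lt_pi
  · have : (0:ℝ) < (j:ℝ)/N := by positivity
    nlinarith [Real.pi_pos]
  · have : (j:ℝ)/N < 1 := by
      rw [div_lt_one hN0]; exact_mod_cast hN
    nlinarith [Real.pi_pos]

lemma sin_frac_ne_zero {N : ℕ} {k : ℤ} (hk0 : k ≠ 0) (hk : |k| < N) :
    Real.sin (Real.pi * ((k:ℝ)/N)) ≠ 0 := by
  rw [Int.abs_eq_natAbs] at hk
  have hpos : 0 < Real.sin (Real.pi * ((k.natAbs:ℝ) / N)) :=
    sin_pos_frac (Int.natAbs_pos.mpr hk0) (by exact_mod_cast hk)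
  have hcast : ((k.natAbs:ℝ)) = |(k:ℝ)| := by rw [Nat.cast_natAbs]; exact Int.cast_abs
  rw [hcast] at hpos
  rw [← abs_ne_zero]
  have habs2 : |Real.sin (Real.pi * (|(k:ℝ)|/N))| = |Real.sin (Real.pi * ((k:ℝ)/N))| := by
    rcases abs_choice ((k:ℝ)) with h | h
    · rw [h]
    · rw [h, show Real.pi * (-(k:ℝ)/N) = -(Real.pi*((k:ℝ)/N)) by ring,
        Real.sin_neg, abs_neg]
  rw [← habs2]
  exact ne_of_gt (lt_of_lt_of_le hpos (le_abs_self _))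

lemma orth (N : ℕ) (k : ℤ) (hk0 : k ≠ 0) (hk : |k| < N) :
    ∑ j ∈ Finset.range N, ee ((j : ℝ) * k / N) = 0 := by
  have h : ∀ j : ℕ, ee ((j:ℝ) * k / N) = ee ((k:ℝ)/N) ^ j := by
    intro j
    rw [← ee_nat_mul]; ring_nf
  simp_rw [h]
  have hN0 : (0:ℝ) < N := by
    have : (0:ℤ) < N := lt_of_le_of_lt (abs_nonneg k) hk
    exact_mod_cast this
  have hzN : ee ((k:ℝ)/N) ^ N = 1 := by
    rw [← ee_nat_mul, show (N:ℝ) * ((k:ℝ)/N) = ((k:ℤ):ℝ) by field_simp, ee_int]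
  have hz1 : ee ((k:ℝ)/N) - 1 ≠ 0 := by
    intro hcon
    have habs := abs_ee_sub_one ((k:ℝ)/N)
    rw [hcon, norm_zero] at habs
    have hsin := sin_frac_ne_zero hk0 hk
    have : |Real.sin (Real.pi * ((k:ℝ)/N))| = 0 := by linarith
    exact hsin (abs_eq_zero.mp this)
  have hgeom := geom_sum_mul (ee ((k:ℝ)/N)) N
  rw [hzN, sub_self] at hgeom
  exact (mul_eq_zero.1 hgeom).resolve_right hz1

lemma two_mul_le_sin {x : ℝ} (h0 : 0 ≤ x) (h1 : x ≤ 1/2) :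
    2 * x ≤ Real.sin (Real.pi * x) := by
  have hpi := Real.pi_pos
  have := Real.mul_le_sin (x := Real.pi * x) (by positivity) (by nlinarith)
  calc 2*x = 2/Real.pi * (Real.pi * x) := by field_simp
    _ ≤ _ := this

lemma sin_lower {j N : ℕ} (hj1 : 1 ≤ j) (hjN : j < N) :
    2 * ((min j (N - j) : ℕ) : ℝ) / N ≤ Real.sin (Real.pi * ((j:ℝ) / N)) := by
  have hN0 : (0:ℝ) < N := by
    have : 0 < N := by omega
    exact_mod_cast this
  rcases le_or_gt (2*j) N with hc | hc
  · have hmin : min j (N - j) = j := by omega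
    rw [hmin]
    have h := two_mul_le_sin (x := (j:ℝ)/N) (by positivity)
      (by rw [div_le_iff₀ hN0]
          have h2 : 2*(j:ℝ) ≤ (N:ℝ) := by exact_mod_cast hc
          linarith)
    calc 2 * (j:ℝ) / N = 2 * ((j:ℝ)/N) := by ring
      _ ≤ _ := h
  · have hmin : min j (N - j) = N - j := by omega
    rw [hmin]
    have hcast : ((N - j : ℕ) : ℝ) = (N:ℝ) - j := by
      push_cast [Nat.cast_sub hjN.le]; ring
    have heq : Real.pi * ((j:ℝ)/N) = Real.pi - Real.pi * (((N:ℝ)-j)/N) := by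
      field_simp; ring
    rw [heq, Real.sin_pi_sub]
    have h := two_mul_le_sin (x := ((N:ℝ)-j)/N)
      (by have : (j:ℝ) ≤ N := by exact_mod_cast hjN.le
          exact div_nonneg (by linarith) hN0.le)
      (by rw [div_le_iff₀ hN0]
          have : (N:ℝ) < 2*j := by exact_mod_cast hc
          nlinarith)
    rw [hcast]
    calc 2 * ((N:ℝ) - j) / N = 2 * (((N:ℝ)-j)/N) := by ring
      _ ≤ _ := h

theorem completion_lemma :
    ∃ C : ℝ, 0 < C ∧ ∀ (N M : ℕ) (a : ℕ → ℂ), 1 ≤ M → M ≤ N →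
      ‖∑ n ∈ Finset.Icc 1 M, a n‖
        ≤ C * ∑ j ∈ Finset.Icc (-(N : ℤ)) (N : ℤ),
            (1 / (|j| + 1 : ℝ)) *
              ‖∑ n ∈ Finset.Icc 1 N, a n * ee ((j : ℝ) * n / N)‖ := by
  refine ⟨2, by norm_num, ?_⟩
  intro N M a hM hMN
  have hN : 1 ≤ N := le_trans hM hMN
  have hN0 : (0:ℝ) < N := by
    have : 0 < N := hN
    exact_mod_cast this
  set T : ℤ → ℂ := fun j => ∑ n ∈ Finset.Icc 1 N, a n * ee ((j:ℝ) * n / N) with hT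
  set b : ℕ → ℂ := fun j => ∑ m ∈ Finset.Icc 1 M, ee (-((j:ℝ) * m) / N) with hb
  set g : ℤ → ℝ := fun i => 1/(((|i| : ℤ) : ℝ) + 1) * ‖T i‖ with hg
  -- inner orthogonality
  have inner : ∀ m ∈ Finset.Icc 1 M, ∀ n ∈ Finset.Icc 1 N,
      ∑ j ∈ Finset.range N, ee ((j:ℝ) * ((n:ℝ) - m) / N)
        = if n = m then (N:ℂ) else 0 := by
    intro m hm n hn
    by_cases h : n = m
    · subst h
      rw [if_pos rfl]
      have : ∀ j ∈ Finset.range N, ee ((j:ℝ) * ((n:ℝ) - n) / N) = 1 := by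
        intro j _
        rw [show ((j:ℝ) * ((n:ℝ) - n) / N) = ((0:ℤ):ℝ) by push_cast; ring, ee_int]
      rw [Finset.sum_congr rfl this]
      simp
    · rw [if_neg h]
      simp only [Finset.mem_Icc] at hm hn
      have hk0 : ((n:ℤ) - m) ≠ 0 := by omega
      have hk : |(n:ℤ) - m| < N := by rw [abs_lt]; omega
      have horth := orth N ((n:ℤ) - m) hk0 hk
      have hcast : ∀ j : ℕ, ((j:ℝ) * ((((n:ℤ) - m):ℤ):ℝ) / N) = ((j:ℝ) * ((n:ℝ) - m) / N) := by
        intro j; push_cast; ring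
      rw [← Finset.sum_congr rfl (fun j _ => congrArg ee (hcast j))]
      exact horth
  -- key identity
  have key : ∑ j ∈ Finset.range N, b j * T (j:ℤ)
      = (N:ℂ) * ∑ n ∈ Finset.Icc 1 M, a n := by
    have expand : ∀ j ∈ Finset.range N, b j * T (j:ℤ)
        = ∑ m ∈ Finset.Icc 1 M, ∑ n ∈ Finset.Icc 1 N,
            a n * ee ((j:ℝ) * ((n:ℝ) - m) / N) := by
      intro j _
      rw [hb, hT]
      dsimp only
      rw [Finset.sum_mul]
      refine Finset.sum_congr rfl (fun m _ => ?_)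
      rw [Finset.mul_sum]
      refine Finset.sum_congr rfl (fun n _ => ?_)
      rw [show (((j:ℤ):ℝ)) = ((j:ℝ)) by push_cast; ring]
      rw [show ee (-((j:ℝ) * m) / N) * (a n * ee ((j:ℝ) * n / N))
          = a n * (ee ((j:ℝ) * n / N) * ee (-((j:ℝ) * m) / N)) by ring, ← ee_add]
      congr 2
      ring
    calc ∑ j ∈ Finset.range N, b j * T (j:ℤ)
        = ∑ j ∈ Finset.range N, ∑ m ∈ Finset.Icc 1 M, ∑ n ∈ Finset.Icc 1 N,
            a n * ee ((j:ℝ) * ((n:ℝ) - m) / N) := Finset.sum_congr rfl expand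
      _ = ∑ m ∈ Finset.Icc 1 M, ∑ j ∈ Finset.range N, ∑ n ∈ Finset.Icc 1 N,
            a n * ee ((j:ℝ) * ((n:ℝ) - m) / N) := Finset.sum_comm
      _ = ∑ m ∈ Finset.Icc 1 M, ∑ n ∈ Finset.Icc 1 N, ∑ j ∈ Finset.range N,
            a n * ee ((j:ℝ) * ((n:ℝ) - m) / N) :=
          Finset.sum_congr rfl (fun m _ => Finset.sum_comm)
      _ = ∑ m ∈ Finset.Icc 1 M, ∑ n ∈ Finset.Icc 1 N,
            a n * (if n = m then (N:ℂ) else 0) := by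
          refine Finset.sum_congr rfl (fun m hm => Finset.sum_congr rfl (fun n hn => ?_))
          rw [← Finset.mul_sum, inner m hm n hn]
      _ = ∑ m ∈ Finset.Icc 1 M, a m * (N:ℂ) := by
          refine Finset.sum_congr rfl (fun m hm => ?_)
          have hmN : m ∈ Finset.Icc 1 N := by
            simp only [Finset.mem_Icc] at hm ⊢; omega
          rw [Finset.sum_congr rfl (fun n _ => mul_ite (n = m) (a n) (N:ℂ) 0)]
          simp only [mul_zero]
          rw [Finset.sum_ite_eq' (Finset.Icc 1 N) m (fun n => a n * (N:ℂ)), if_pos hmN]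
      _ = (N:ℂ) * ∑ n ∈ Finset.Icc 1 M, a n := by
          rw [Finset.mul_sum]
          exact Finset.sum_congr rfl (fun m _ => by ring)
  -- the folding map
  set φ : ℕ → ℤ := fun j => if 2*j ≤ N then (j:ℤ) else (j:ℤ) - N with hφ
  have hTφ : ∀ j : ℕ, T (φ j) = T (j:ℤ) := by
    intro j
    rw [hφ]
    dsimp only
    split_ifs with h
    · rfl
    · rw [hT]
      dsimp only
      refine Finset.sum_congr rfl (fun n _ => ?_)
      congr 1
      rw [show ((((j:ℤ) - N : ℤ)):ℝ) * n / N = (((j:ℤ):ℝ)) * n / N - n by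
        push_cast; field_simp]
      rw [ee_sub_nat]
  -- bound on b
  have hb_bound : ∀ j ∈ Finset.range N,
      ‖b j‖ ≤ 2 * (N:ℝ) / (((|φ j| : ℤ) : ℝ) + 1) := by
    intro j hj
    simp only [Finset.mem_range] at hj
    rw [Int.cast_abs]
    rcases Nat.eq_zero_or_pos j with h0 | h0
    · subst h0
      have hφ0 : φ 0 = 0 := by rw [hφ]; simp
      rw [hφ0]
      have hb0 : b 0 = (M:ℂ) := by
        rw [hb]
        dsimp only
        have : ∀ m ∈ Finset.Icc 1 M, ee (-(((0:ℕ):ℝ) * m) / N) = 1 := by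
          intro m _
          rw [show (-(((0:ℕ):ℝ) * m) / N) = ((0:ℤ):ℝ) by push_cast; ring, ee_int]
        rw [Finset.sum_congr rfl this]
        simp
      rw [hb0, Complex.norm_natCast]
      simp only [Int.cast_zero, abs_zero, zero_add, div_one]
      have : (M:ℝ) ≤ (N:ℝ) := by exact_mod_cast hMN
      linarith
    · -- j ≥ 1
      set z : ℂ := ee (-(j:ℝ)/N) with hz
      have hbz : b j = ∑ m ∈ Finset.Icc 1 M, z ^ m := by
        rw [hb]
        dsimp only
        refine Finset.sum_congr rfl (fun m _ => ?_)
        rw [hz, ← ee_nat_mul]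
        congr 1
        ring
      have hgeo := geom_bound z (abs_ee _) M
      rw [← hbz] at hgeo
      have habsz : ‖z - 1‖ = 2 * Real.sin (Real.pi * ((j:ℝ)/N)) := by
        rw [hz, abs_ee_sub_one]
        congr 1
        rw [show Real.pi * (-(j:ℝ)/N) = -(Real.pi * ((j:ℝ)/N)) by ring, Real.sin_neg, abs_neg,
          abs_of_nonneg (sin_pos_frac h0 hj).le]
      set μ : ℝ := ((min j (N - j) : ℕ) : ℝ) with hμ
      have hμ1 : (1:ℝ) ≤ μ := by
        rw [hμ]
        have : 1 ≤ min j (N - j) := by omega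
        exact_mod_cast this
      have hsl : 2 * μ / N ≤ Real.sin (Real.pi * ((j:ℝ)/N)) := sin_lower h0 hj
      have hφμ : |((φ j : ℤ):ℝ)| = μ := by
        rw [hφ, hμ]
        dsimp only
        split_ifs with h
        · rw [show (((j:ℤ)):ℝ) = (j:ℝ) by push_cast; ring, abs_of_nonneg (by positivity)]
          congr 1
          have : min j (N - j) = j := by omega
          rw [this]
        · rw [show ((((j:ℤ) - N : ℤ)):ℝ) = (j:ℝ) - N by push_cast; ring]
          rw [abs_of_nonpos (by
            have : (j:ℝ) ≤ N := by exact_mod_cast hj.le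
            linarith)]
          have hc : min j (N - j) = N - j := by omega
          rw [hc]
          push_cast [Nat.cast_sub hj.le]
          ring
      rw [hφμ]
      -- from hgeo, habsz, hsl : abs (b j) ≤ 2 N / (μ + 1)
      set B : ℝ := ‖b j‖ with hB
      have hB0 : 0 ≤ B := norm_nonneg _
      have hs0 : 0 < Real.sin (Real.pi * ((j:ℝ)/N)) := sin_pos_frac h0 hj
      rw [habsz] at hgeo
      -- B * (2 s) ≤ 2, s ≥ 2μ/N  ⟹  B (μ+1) ≤ 2 N
      rw [div_le_iff₀ (by positivity)] at hsl
      have key2 : B * (μ + 1) ≤ 2 * N := by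
        nlinarith [mul_le_mul_of_nonneg_left hsl hB0]
      rw [le_div_iff₀ (by positivity)]
      linarith
  -- injectivity and image
  have himg : ∀ j ∈ Finset.range N, φ j ∈ Finset.Icc (-(N:ℤ)) (N:ℤ) := by
    intro j hj
    simp only [Finset.mem_range] at hj
    simp only [Finset.mem_Icc, hφ]
    split_ifs <;> omega
  have hinj : ∀ j1 ∈ Finset.range N, ∀ j2 ∈ Finset.range N, φ j1 = φ j2 → j1 = j2 := by
    intro j1 h1 j2 h2 h
    simp only [Finset.mem_range] at h1 h2
    simp only [hφ] at h
    split_ifs at h <;> omega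
  -- assemble
  have gnonneg : ∀ i : ℤ, 0 ≤ g i := by
    intro i
    rw [hg]
    dsimp only
    positivity
  have hsum1 : ∑ j ∈ Finset.range N, g (φ j)
      ≤ ∑ i ∈ Finset.Icc (-(N:ℤ)) (N:ℤ), g i := by
    rw [← Finset.sum_image (f := g) hinj]
    refine Finset.sum_le_sum_of_subset_of_nonneg ?_ (fun i _ _ => gnonneg i)
    intro i hi
    simp only [Finset.mem_image] at hi
    obtain ⟨j, hj, rfl⟩ := hi
    exact himg j hj
  have main : (N:ℝ) * ‖∑ n ∈ Finset.Icc 1 M, a n‖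
      ≤ 2 * (N:ℝ) * ∑ i ∈ Finset.Icc (-(N:ℤ)) (N:ℤ), g i := by
    calc (N:ℝ) * ‖∑ n ∈ Finset.Icc 1 M, a n‖
        = ‖(N:ℂ) * ∑ n ∈ Finset.Icc 1 M, a n‖ := by
          rw [norm_mul, Complex.norm_natCast]
      _ = ‖∑ j ∈ Finset.range N, b j * T (j:ℤ)‖ := by rw [key]
      _ ≤ ∑ j ∈ Finset.range N, ‖b j * T (j:ℤ)‖ :=
          norm_sum_le _ _
      _ ≤ ∑ j ∈ Finset.range N, 2 * (N:ℝ) * g (φ j) := by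
          refine Finset.sum_le_sum (fun j hj => ?_)
          rw [norm_mul]
          have h1 := hb_bound j hj
          have h2 : ‖T (j:ℤ)‖ = ‖T (φ j)‖ := by rw [hTφ]
          rw [h2, hg]
          dsimp only
          have h3 : 0 ≤ ‖T (φ j)‖ := norm_nonneg _
          calc ‖b j‖ * ‖T (φ j)‖
              ≤ (2 * (N:ℝ) / (((|φ j| : ℤ) : ℝ) + 1)) * ‖T (φ j)‖ :=
                mul_le_mul_of_nonneg_right h1 h3
            _ = 2 * (N:ℝ) * (1/(((|φ j| : ℤ) : ℝ) + 1) * ‖T (φ j)‖) := by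
                ring
      _ = 2 * (N:ℝ) * ∑ j ∈ Finset.range N, g (φ j) := by rw [Finset.mul_sum]
      _ ≤ 2 * (N:ℝ) * ∑ i ∈ Finset.Icc (-(N:ℤ)) (N:ℤ), g i := by
          have h2N : (0:ℝ) ≤ 2 * N := by positivity
          exact mul_le_mul_of_nonneg_left hsum1 h2N
  have hrw : ∑ j ∈ Finset.Icc (-(N : ℤ)) (N : ℤ),
      (1 / (|j| + 1 : ℝ)) *
        ‖∑ n ∈ Finset.Icc 1 N, a n * ee ((j : ℝ) * n / N)‖
      = ∑ i ∈ Finset.Icc (-(N:ℤ)) (N:ℤ), g i :=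
    Finset.sum_congr rfl (fun i _ => rfl)
  rw [hrw]
  refine le_of_mul_le_mul_left ?_ hN0
  calc (N:ℝ) * ‖∑ n ∈ Finset.Icc 1 M, a n‖
      ≤ 2 * (N:ℝ) * ∑ i ∈ Finset.Icc (-(N:ℤ)) (N:ℤ), g i := main
    _ = (N:ℝ) * (2 * ∑ i ∈ Finset.Icc (-(N:ℤ)) (N:ℤ), g i) := by ring
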